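/- Let α > −1 and r ∈ [0,1). Then (1/2π)∫₀^{2π} |(1 − r e^{it})^{−α} − 1| dt ≤ |(1 − r)^{−α} − 1|, where (1 − r e^{it})^{−α} is the principal complex power. -/

import Mathlib

open Complex MeasureTheory Real Set

noncomputable section

/-- Wirtinger derivative `∂f = (f_x - i f_y)/2` of a function `f : ℂ → ℂ`,
viewed as a real-differentiable map. -/
def wdz (f : ℂ → ℂ) (z : ℂ) : ℂ :=
  (fderiv ℝ f z 1 - Complex.I * fderiv ℝ f z Complex.I) / 2

/-- Wirtinger derivative `∂̄f = (f_x + i f_y)/2`. -/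
def wdzbar (f : ℂ → ℂ) (z : ℂ) : ℂ :=
  (fderiv ℝ f z 1 + Complex.I * fderiv ℝ f z Complex.I) / 2

/-- The `α`-harmonic Poisson kernel
`P_α(z) = (1-|z|²)^{α+1} / ((1-z)(1-z̄)^{α+1})` (principal powers). -/
def poissonKernel' (α : ℝ) (z : ℂ) : ℂ :=
  (((1 - ‖z‖ ^ 2) ^ (α + 1) : ℝ) : ℂ) /
    ((1 - z) * (1 - (starRingEnd ℂ) z) ^ ((α : ℂ) + 1))

/-- The `α`-harmonic extension `P_α[F](z) = (1/2π) ∫₀^{2π} P_α(z e^{-it}) F(t) dt`. -/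
def poissonExt (α : ℝ) (F : ℝ → ℂ) (z : ℂ) : ℂ :=
  (1 / (2 * Real.pi) : ℂ) *
    ∫ t in (0:ℝ)..(2 * Real.pi), poissonKernel' α (z * Complex.exp (-Complex.I * t)) * F t

/-- The angular derivative `∂_θ f(z) = i (z ∂f(z) - z̄ ∂̄f(z))`. -/
def angularDeriv (f : ℂ → ℂ) (z : ℂ) : ℂ :=
  Complex.I * (z * wdz f z - (starRingEnd ℂ) z * wdzbar f z)

/-- The integral mean `M_p(r,g) = ((1/2π) ∫₀^{2π} |g(r e^{iθ})|^p dθ)^{1/p}`. -/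
def Mp (p : ℝ) (r : ℝ) (g : ℂ → ℂ) : ℝ :=
  ((1 / (2 * Real.pi)) *
      ∫ θ in (0:ℝ)..(2 * Real.pi),
        ‖g ((r : ℂ) * Complex.exp (Complex.I * θ))‖ ^ p) ^ (1 / p)

/-- The boundary `L^p` norm `‖G‖_{L^p} = ((1/2π) ∫₀^{2π} |G(t)|^p dt)^{1/p}`. -/
def lpNormBdry (p : ℝ) (G : ℝ → ℂ) : ℝ :=
  ((1 / (2 * Real.pi)) * ∫ t in (0:ℝ)..(2 * Real.pi), ‖G t‖ ^ p) ^ (1 / p)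

/-- The constant `c_α = Γ(α+1)/Γ(α/2+1)²`. -/
def cAlpha (α : ℝ) : ℝ := Real.Gamma (α + 1) / (Real.Gamma (α / 2 + 1)) ^ 2

/-- `I_α(r) = (1/2π) ∫₀^{2π} (1-r²)^α / |1 - r e^{it}|^{α+1} dt`. -/
def Ialpha (α r : ℝ) : ℝ :=
  (1 / (2 * Real.pi)) *
    ∫ t in (0:ℝ)..(2 * Real.pi),
      (1 - r ^ 2) ^ α / (‖1 - (r : ℂ) * Complex.exp (Complex.I * t)‖) ^ (α + 1)

/-- `g_α(z) = ((1-|z|²)/(1-z̄))^α` (principal complex power). -/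
def gAlpha (α : ℝ) (z : ℂ) : ℂ :=
  ((((1 - ‖z‖ ^ 2 : ℝ)) : ℂ) / (1 - (starRingEnd ℂ) z)) ^ (α : ℂ)

end

lemma pointwise_cpow_bound (α : ℝ) (hα : -1 < α) (r : ℝ) (hr0 : 0 ≤ r) (hr1 : r < 1)
    (w : ℂ) (habsw : ‖w‖ ≤ r) :
    ‖(1 - w) ^ (-(α : ℂ)) - 1‖ ≤ |(1 - r) ^ (-α) - 1| := by
  have hsr : ∀ s ∈ Set.Icc (0:ℝ) 1, 0 < 1 - s * r := by
    intro s hs; nlinarith [hs.1, hs.2]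
  have hre : ∀ s ∈ Set.Icc (0:ℝ) 1, 1 - s * r ≤ ((1:ℂ) - (s:ℂ) * w).re := by
    intro s hs
    have h1 : w.re ≤ r := (Complex.re_le_norm w).trans habsw
    have h2 : s * w.re ≤ s * r := mul_le_mul_of_nonneg_left h1 hs.1
    simp only [Complex.sub_re, Complex.one_re, Complex.mul_re, Complex.ofReal_re,
      Complex.ofReal_im, zero_mul, sub_zero]
    linarith
  have habs' : ∀ s ∈ Set.Icc (0:ℝ) 1, 1 - s * r ≤ ‖1 - (s:ℂ) * w‖ := by
    intro s hs
    exact (hre s hs).trans (Complex.re_le_norm _)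
  have hslit : ∀ s ∈ Set.Icc (0:ℝ) 1, ((1:ℂ) - (s:ℂ) * w) ∈ Complex.slitPlane := by
    intro s hs
    exact Or.inl (lt_of_lt_of_le (hsr s hs) (hre s hs))
  -- the complex derivative
  set d : ℝ → ℂ := fun s => (-(α:ℂ)) * ((1:ℂ) - (s:ℂ) * w) ^ (-(α:ℂ) - 1) * (-w) with hd
  have hderiv : ∀ s ∈ Set.Icc (0:ℝ) 1,
      HasDerivAt (fun u : ℝ => ((1:ℂ) - (u:ℂ) * w) ^ (-(α:ℂ))) (d s) s := by
    intro s hs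
    have h1 : HasDerivAt (fun z : ℂ => (1 - z * w) ^ (-(α:ℂ))) (d s) (s:ℂ) := by
      have h2 : HasDerivAt (fun z : ℂ => 1 - z * w) (-w) (s:ℂ) := by
        simpa using ((hasDerivAt_id (s:ℂ)).mul_const w).const_sub 1
      exact h2.cpow_const (hslit s hs)
    exact h1.comp_ofReal
  have hdcont : ContinuousOn d (Set.Icc (0:ℝ) 1) := by
    intro s hs
    apply ContinuousAt.continuousWithinAt
    have hb : ContinuousAt (fun u : ℝ => (1:ℂ) - (u:ℂ) * w) s := by fun_prop
    have hc : ContinuousAt (fun u : ℝ => ((1:ℂ) - (u:ℂ) * w) ^ (-(α:ℂ) - 1)) s :=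
      hb.cpow continuousAt_const (hslit s hs)
    exact (hc.const_mul (-(α:ℂ))).mul_const (-w)
  have hdint : IntervalIntegrable d MeasureTheory.volume 0 1 :=
    (hdcont.mono (by rw [Set.uIcc_of_le zero_le_one])).intervalIntegrable
  have heq : ((1:ℂ) - w) ^ (-(α:ℂ)) - 1 = ∫ s in (0:ℝ)..1, d s := by
    have := intervalIntegral.integral_eq_sub_of_hasDerivAt
      (f := fun u : ℝ => ((1:ℂ) - (u:ℂ) * w) ^ (-(α:ℂ))) (f' := d)
      (fun s hs => hderiv s (by rwa [Set.uIcc_of_le zero_le_one] at hs)) hdint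
    rw [this]
    norm_num
  -- real bound function
  set b : ℝ → ℝ := fun s => |α| * ((1 - s * r) ^ (-α - 1) * r) with hb
  have hecont : ContinuousOn (fun s : ℝ => (1 - s * r) ^ (-α - 1) * r) (Set.Icc (0:ℝ) 1) := by
    apply ContinuousOn.mul _ continuousOn_const
    apply ContinuousOn.rpow_const (by fun_prop)
    intro s hs
    exact Or.inl (hsr s hs).ne'
  have hbint : IntervalIntegrable b MeasureTheory.volume 0 1 := by
    apply ContinuousOn.intervalIntegrable
    rw [Set.uIcc_of_le zero_le_one]
    exact hecont.const_smul |α|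
  have hnormle : ‖(1 - w) ^ (-(α:ℂ)) - 1‖ ≤ |∫ s in (0:ℝ)..1, b s| := by
    rw [heq]
    apply intervalIntegral.norm_integral_le_abs_of_norm_le _ hbint
    filter_upwards [MeasureTheory.ae_restrict_mem measurableSet_uIoc] with s hs
    have hs' : s ∈ Set.Icc (0:ℝ) 1 := by
      rw [Set.uIoc_of_le zero_le_one] at hs; exact Set.Ioc_subset_Icc_self hs
    have hcast : (-(α:ℂ) - 1) = (((-α - 1 : ℝ)) : ℂ) := by push_cast; ring
    have habs_pow : ‖((1:ℂ) - (s:ℂ) * w) ^ (-(α:ℂ) - 1)‖ =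
        (‖(1:ℂ) - (s:ℂ) * w‖) ^ (-α - 1) := by
      rw [hcast, Complex.norm_cpow_real]
    have hpowle : (‖(1:ℂ) - (s:ℂ) * w‖) ^ (-α - 1) ≤ (1 - s * r) ^ (-α - 1) :=
      Real.rpow_le_rpow_of_nonpos (hsr s hs') (habs' s hs') (by linarith)
    have : ‖d s‖ = |α| * ((‖(1:ℂ) - (s:ℂ) * w‖) ^ (-α - 1) * ‖w‖) := by
      simp only [hd, norm_mul, norm_neg, Complex.norm_real, Real.norm_eq_abs,
        habs_pow, mul_assoc]
    rw [this, hb]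
    apply mul_le_mul_of_nonneg_left _ (abs_nonneg α)
    apply mul_le_mul hpowle habsw (norm_nonneg w)
      (Real.rpow_nonneg (hsr s hs').le _)
  -- compute the integral of b
  set K : ℝ := ∫ s in (0:ℝ)..1, (1 - s * r) ^ (-α - 1) * r with hK
  have heint : IntervalIntegrable (fun s : ℝ => (1 - s * r) ^ (-α - 1) * r)
      MeasureTheory.volume 0 1 := by
    apply ContinuousOn.intervalIntegrable
    rwa [Set.uIcc_of_le zero_le_one]
  have hGderiv : ∀ s ∈ Set.Icc (0:ℝ) 1,
      HasDerivAt (fun u : ℝ => (1 - u * r) ^ (-α)) (α * ((1 - s * r) ^ (-α - 1) * r)) s := by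
    intro s hs
    have hinner : HasDerivAt (fun u : ℝ => 1 - u * r) (-r) s := by
      simpa using ((hasDerivAt_id s).mul_const r).const_sub 1
    have := hinner.rpow_const (p := -α) (Or.inl (hsr s hs).ne')
    convert this using 1
    ring
  have hαK : α * K = (1 - r) ^ (-α) - 1 := by
    have h1 := intervalIntegral.integral_eq_sub_of_hasDerivAt
      (f := fun u : ℝ => (1 - u * r) ^ (-α))
      (f' := fun s => α * ((1 - s * r) ^ (-α - 1) * r))
      (fun s hs => hGderiv s (by rwa [Set.uIcc_of_le zero_le_one] at hs))
      (heint.const_mul α)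
    rw [intervalIntegral.integral_const_mul] at h1
    rw [← hK] at h1
    rw [h1]
    norm_num
  have hKnonneg : 0 ≤ K := by
    apply intervalIntegral.integral_nonneg zero_le_one
    intro s hs
    exact mul_nonneg (Real.rpow_nonneg (hsr s hs).le _) hr0
  have hbval : ∫ s in (0:ℝ)..1, b s = |α| * K := by
    rw [hb, hK, intervalIntegral.integral_const_mul]
  calc ‖(1 - w) ^ (-(α:ℂ)) - 1‖ ≤ |∫ s in (0:ℝ)..1, b s| := hnormle
    _ = |α| * K := by rw [hbval, _root_.abs_of_nonneg (mul_nonneg (abs_nonneg α) hKnonneg)]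
    _ = |α * K| := by rw [abs_mul, _root_.abs_of_nonneg hKnonneg]
    _ = |(1 - r) ^ (-α) - 1| := by rw [hαK]

/-- For `α > -1` and `0 ≤ r < 1`,
`(1/2π)∫₀^{2π} |(1-re^{it})^{-α} - 1| dt ≤ |(1-r)^{-α} - 1|`. -/
theorem integral_abs_cpow_sub_one_le (α : ℝ) (hα : -1 < α) (r : ℝ) (hr : r ∈ Set.Ico (0:ℝ) 1) :
    (1 / (2 * Real.pi)) *
        ∫ t in (0:ℝ)..(2 * Real.pi),
          ‖(1 - (r : ℂ) * Complex.exp (Complex.I * t)) ^ (-(α : ℂ)) - 1‖ ≤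
      |(1 - r) ^ (-α) - 1| := by
  obtain ⟨hr0, hr1⟩ := hr
  set C : ℝ := |(1 - r) ^ (-α) - 1| with hC
  have hCnonneg : 0 ≤ C := abs_nonneg _
  have hπ : (0:ℝ) < 2 * Real.pi := by positivity
  set f : ℝ → ℝ := fun t =>
    ‖(1 - (r : ℂ) * Complex.exp (Complex.I * t)) ^ (-(α : ℂ)) - 1‖ with hf
  have hpt : ∀ t : ℝ, f t ≤ C := by
    intro t
    apply pointwise_cpow_bound α hα r hr0 hr1
    rw [norm_mul, Complex.norm_real, Real.norm_eq_abs, _root_.abs_of_nonneg hr0]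
    simp [Complex.norm_exp]
  by_cases hint : IntervalIntegrable f MeasureTheory.volume 0 (2 * Real.pi)
  · have h1 : (∫ t in (0:ℝ)..(2 * Real.pi), f t) ≤ ∫ _t in (0:ℝ)..(2 * Real.pi), C :=
      intervalIntegral.integral_mono_on hπ.le hint intervalIntegrable_const
        (fun t _ => hpt t)
    rw [intervalIntegral.integral_const, smul_eq_mul, sub_zero] at h1
    calc (1 / (2 * Real.pi)) * ∫ t in (0:ℝ)..(2 * Real.pi), f t
        ≤ (1 / (2 * Real.pi)) * (2 * Real.pi * C) := by
          apply mul_le_mul_of_nonneg_left h1 (by positivity)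
      _ = C := by field_simp
  · rw [intervalIntegral.integral_undef hint, mul_zero]
    exact hCnonneg
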